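/- Let A be a commutative ring, I a set, and R = A[(X_i)_{i∈I}] the polynomial ring. If the nilradical nil(A) of A is nilpotent (i.e., there exists n ∈ ℕ with nil(A)^n = 0), then for every monomial ideal 𝔞 ⊆ R one has Γ_{⌊𝔞⌋} = Γ_{√𝔞}, i.e., Γ_{⌊𝔞⌋}(M) = Γ_{√𝔞}(M) for every R-module M. (Implication (i) ⇒ (ii) of the unnumbered Proposition of Section 2.) -/

import Mathlib

set_option maxHeartbeats 800000

open MvPolynomial

/-- `suppInd μ` is the characteristic function of the support of `μ`,
so that `X^(suppInd μ) = ∏_{i : μ i > 0} X i`. -/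
noncomputable def suppInd {I : Type v} (μ : I →₀ ℕ) : I →₀ ℕ :=
  μ.mapRange (fun n => if n = 0 then 0 else 1) (by simp)

/-- A monomial ideal of `A[(X_i)_{i ∈ I}]` is an ideal generated by a set of monomials. -/
def IsMonomialIdeal {A : Type u} [CommRing A] {I : Type v}
    (𝔞 : Ideal (MvPolynomial I A)) : Prop :=
  ∃ E : Set (I →₀ ℕ), 𝔞 = Ideal.span ((fun μ => monomial μ (1 : A)) '' E)

/-- `⌊𝔞⌋` is the ideal generated by the monomials `X^(suppInd μ)` for all monomials
`X^μ ∈ 𝔞`. -/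
noncomputable def mvFloor {A : Type u} [CommRing A] {I : Type v}
    (𝔞 : Ideal (MvPolynomial I A)) : Ideal (MvPolynomial I A) :=
  Ideal.span {f | ∃ μ : I →₀ ℕ, monomial μ (1 : A) ∈ 𝔞 ∧ f = monomial (suppInd μ) (1 : A)}

section Aux

universe u v
variable {A : Type u} [CommRing A] {I : Type v}

lemma suppInd_le (μ : I →₀ ℕ) : suppInd μ ≤ μ := by
  rw [Finsupp.le_def]
  intro i
  simp only [suppInd, Finsupp.mapRange_apply]
  split <;> omega

lemma suppInd_sq (μ : I →₀ ℕ) (i : I) : suppInd μ i ≤ 1 := by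
  simp only [suppInd, Finsupp.mapRange_apply]
  split <;> omega

lemma le_of_sq_le_smul {σ ν : I →₀ ℕ} (hσ : ∀ i, σ i ≤ 1) {k : ℕ}
    (h : σ ≤ k • ν) : σ ≤ ν := by
  rw [Finsupp.le_def] at h ⊢
  intro i
  have h1 := h i
  have h2 := hσ i
  simp only [Finsupp.smul_apply, smul_eq_mul] at h1
  nlinarith [h1, h2]

lemma sup_pow_le {R : Type*} [CommRing R] (P J : Ideal R) (n : ℕ) :
    (P ⊔ J) ^ n ≤ P ⊔ J ^ n := by
  induction n with
  | zero => simp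
  | succ n ih =>
    rw [pow_succ]
    calc (P ⊔ J) ^ n * (P ⊔ J) ≤ (P ⊔ J ^ n) * (P ⊔ J) := Ideal.mul_mono ih le_rfl
    _ = P * P ⊔ P * J ⊔ (J ^ n * P ⊔ J ^ n * J) := by
        rw [Ideal.sup_mul, Ideal.mul_sup, Ideal.mul_sup]
    _ ≤ P ⊔ J ^ (n + 1) := by
        apply sup_le (sup_le _ _) (sup_le _ _)
        · exact Ideal.mul_le_right.trans le_sup_left
        · exact Ideal.mul_le_left.trans le_sup_left
        · exact Ideal.mul_le_right.trans le_sup_left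
        · rw [← pow_succ]; exact le_sup_right

lemma coeff_pow_top [LinearOrder I] (f : MvPolynomial I A) (ν : I →₀ ℕ)
    (hmax : ∀ μ ∈ f.support, toLex μ ≤ toLex ν) (k : ℕ) :
    (∀ μ ∈ (f ^ k).support, toLex μ ≤ toLex (k • ν)) ∧
      coeff (k • ν) (f ^ k) = (coeff ν f) ^ k := by
  classical
  induction k with
  | zero =>
    refine ⟨fun μ hμ => ?_, by simp⟩
    rw [pow_zero, mem_support_iff, coeff_one] at hμ
    have : μ = 0 := by by_contra hne; simp [Ne.symm hne] at hμ
    subst this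
    simp
  | succ k ih =>
    have hsmul : (k + 1) • ν = k • ν + ν := succ_nsmul ν k
    constructor
    · intro μ hμ
      rw [pow_succ] at hμ
      obtain ⟨a, ha, b, hb, rfl⟩ := Finset.mem_add.mp (support_mul _ _ hμ)
      rw [hsmul, toLex_add]
      exact add_le_add (ih.1 a ha) (hmax b hb)
    · rw [pow_succ, hsmul, coeff_mul]
      rw [Finset.sum_eq_single (k • ν, ν)]
      · rw [ih.2, pow_succ]
      · rintro ⟨a, b⟩ hab hne
        rw [Finset.HasAntidiagonal.mem_antidiagonal] at hab
        by_contra hz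
        have ha : a ∈ (f ^ k).support := by
          rw [mem_support_iff]; intro h0; exact hz (by rw [h0, zero_mul])
        have hb : b ∈ f.support := by
          rw [mem_support_iff]; intro h0; exact hz (by rw [h0, mul_zero])
        have h1 : toLex a ≤ toLex (k • ν) := ih.1 a ha
        have h2 : toLex b ≤ toLex ν := hmax b hb
        have hsum : toLex a + toLex b = toLex (k • ν) + toLex ν := by
          rw [← toLex_add, ← toLex_add, hab]
        have hae : toLex a = toLex (k • ν) := by
          have : toLex a + toLex b = toLex (k • ν) + toLex b :=
            le_antisymm (add_le_add_left h1 _)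
              (by rw [hsum]; exact add_le_add_right h2 _)
          exact add_right_cancel this
        have hae' : a = k • ν := toLex.injective hae
        have hbe' : b = ν := by
          rw [hae'] at hab
          exact add_left_cancel hab
        exact hne (Prod.ext hae' hbe')
      · intro hmem
        exact absurd (by simp) hmem

/-- A squarefree monomial ideal over `A` contains each element of its radical up to a
summand with coefficients in the nilradical of `A`. -/
lemma radical_span_le [LinearOrder I] {S : Set (I →₀ ℕ)} (hS : ∀ σ ∈ S, ∀ i, σ i ≤ 1) :
    (Ideal.span ((fun μ => monomial μ (1 : A)) '' S)).radical ≤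
      Ideal.span ((fun μ => monomial μ (1 : A)) '' S) ⊔
        Ideal.map (C : A →+* MvPolynomial I A) (nilradical A) := by
  classical
  set 𝔟 : Ideal (MvPolynomial I A) := Ideal.span ((fun μ => monomial μ (1 : A)) '' S) with h𝔟
  set J : Ideal (MvPolynomial I A) := Ideal.map (C : A →+* MvPolynomial I A) (nilradical A)
  suffices H : ∀ n : ℕ, ∀ f : MvPolynomial I A, f.support.card ≤ n →
      f ∈ 𝔟.radical → f ∈ 𝔟 ⊔ J by
    intro f hf
    exact H f.support.card f le_rfl hf
  intro n
  induction n with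
  | zero =>
    intro f hcard _
    have : f = 0 := support_eq_empty.mp (Finset.card_eq_zero.mp (Nat.le_zero.mp hcard))
    rw [this]
    exact zero_mem _
  | succ n ih =>
    intro f hcard hf
    by_cases h0 : f = 0
    · rw [h0]; exact zero_mem _
    have hne : f.support.Nonempty := support_nonempty.mpr h0
    have hne' : (f.support.image toLex).Nonempty := hne.image toLex
    obtain ⟨ν, hνsupp, hνeq⟩ :=
      Finset.mem_image.mp ((f.support.image toLex).max'_mem hne')
    have hmax : ∀ μ ∈ f.support, toLex μ ≤ toLex ν := fun μ hμ => by
      rw [hνeq]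
      exact Finset.le_max' _ _ (Finset.mem_image_of_mem toLex hμ)
    set c : A := coeff ν f with hc
    set f₂ : MvPolynomial I A := f - monomial ν c with hf₂
    have hsupp2 : f₂.support ⊆ f.support.erase ν := by
      intro μ hμ
      rw [mem_support_iff] at hμ
      rw [hf₂, coeff_sub, coeff_monomial] at hμ
      rcases eq_or_ne ν μ with hEq | hNe
      · exfalso; apply hμ; rw [if_pos hEq, ← hEq, ← hc, sub_self]
      · rw [if_neg hNe, sub_zero] at hμ
        exact Finset.mem_erase.mpr ⟨fun h => hNe h.symm, mem_support_iff.mpr hμ⟩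
    have hcard2 : f₂.support.card ≤ n := by
      have h1 := Finset.card_le_card hsupp2
      have h2 := Finset.card_erase_of_mem hνsupp
      omega
    have hstep : ∀ m : MvPolynomial I A, m = monomial ν c → m ∈ 𝔟 ⊔ J →
        m ∈ 𝔟.radical → f ∈ 𝔟 ⊔ J := by
      intro m hm hmem hmrad
      have hf₂rad : f₂ ∈ 𝔟.radical := by
        rw [hf₂, ← hm]
        exact Ideal.sub_mem _ hf hmrad
      have := ih f₂ hcard2 hf₂rad
      have : f = f₂ + m := by rw [hf₂, hm]; ring
      rw [this]
      exact add_mem (ih f₂ hcard2 hf₂rad) hmem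
    by_cases hcase : ∃ σ ∈ S, σ ≤ ν
    · obtain ⟨σ, hσS, hσν⟩ := hcase
      have hm : monomial ν c ∈ 𝔟 := by
        have heq : monomial ν c = monomial (ν - σ) c * monomial σ (1 : A) := by
          rw [monomial_mul, mul_one, tsub_add_cancel_of_le hσν]
        rw [heq]
        exact Ideal.mul_mem_left _ _ (Ideal.subset_span ⟨σ, hσS, rfl⟩)
      exact hstep _ rfl (Ideal.mem_sup_left hm) (Ideal.le_radical hm)
    · obtain ⟨k, hk⟩ := hf
      rcases k with - | k
      · rw [pow_zero] at hk
        exact Ideal.mem_sup_left ((Ideal.eq_top_iff_one 𝔟).mpr hk ▸ Submodule.mem_top)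
      have hco := (coeff_pow_top f ν hmax (k + 1)).2
      have hzero : coeff ((k + 1) • ν) (f ^ (k + 1)) = 0 := by
        by_contra hz
        obtain ⟨σ, hσ, hle⟩ :=
          mem_ideal_span_monomial_image.mp hk _ (mem_support_iff.mpr hz)
        exact hcase ⟨σ, hσ, le_of_sq_le_smul (hS σ hσ) hle⟩
      have hc0 : c ^ (k + 1) = 0 := by rw [← hco]; exact hzero
      have hcnil : c ∈ nilradical A := ⟨k + 1, hc0⟩
      have hmJ : monomial ν c ∈ J := by
        have heq : monomial ν c = C c * monomial ν (1 : A) := by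
          rw [C_mul_monomial, mul_one]
        rw [heq]
        exact Ideal.mul_mem_right _ _ (Ideal.mem_map_of_mem _ hcnil)
      have hmrad : monomial ν c ∈ 𝔟.radical := by
        refine ⟨k + 1, ?_⟩
        rw [monomial_pow, hc0, monomial_zero]
        exact zero_mem _
      exact hstep _ rfl (Ideal.mem_sup_right hmJ) hmrad

lemma mvFloor_eq_span (𝔞 : Ideal (MvPolynomial I A)) :
    mvFloor 𝔞 = Ideal.span ((fun μ => monomial μ (1 : A)) ''
      (suppInd '' {μ : I →₀ ℕ | monomial μ (1 : A) ∈ 𝔞})) := by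
  unfold mvFloor
  congr 1
  ext f
  constructor
  · rintro ⟨μ, hμ, rfl⟩
    exact ⟨suppInd μ, ⟨μ, hμ, rfl⟩, rfl⟩
  · rintro ⟨ν, ⟨μ, hμ, rfl⟩, rfl⟩
    exact ⟨μ, hμ, rfl⟩

lemma le_mvFloor {𝔞 : Ideal (MvPolynomial I A)} (h : IsMonomialIdeal 𝔞) :
    𝔞 ≤ mvFloor 𝔞 := by
  obtain ⟨E, hE⟩ := h
  conv_lhs => rw [hE]
  rw [Ideal.span_le]
  rintro g ⟨μ, hμE, rfl⟩
  have hμ𝔞 : monomial μ (1 : A) ∈ 𝔞 := by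
    rw [hE]; exact Ideal.subset_span ⟨μ, hμE, rfl⟩
  have heq : monomial μ (1 : A) = monomial (μ - suppInd μ) (1 : A) *
      monomial (suppInd μ) (1 : A) := by
    rw [monomial_mul, one_mul, tsub_add_cancel_of_le (suppInd_le μ)]
  show monomial μ (1 : A) ∈ mvFloor 𝔞
  rw [heq]
  exact Ideal.mul_mem_left _ _ (Ideal.subset_span ⟨μ, hμ𝔞, rfl⟩)

lemma mvFloor_le_radical (𝔞 : Ideal (MvPolynomial I A)) :
    mvFloor 𝔞 ≤ 𝔞.radical := by
  unfold mvFloor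
  rw [Ideal.span_le]
  rintro g ⟨μ, hμ𝔞, rfl⟩
  set k : ℕ := μ.sum fun _ n => n with hk
  have hle : μ ≤ k • suppInd μ := by
    rw [Finsupp.le_def]
    intro i
    rcases eq_or_ne (μ i) 0 with h0 | h0
    · simp [h0]
    · have h1 : suppInd μ i = 1 := by
        simp only [suppInd, Finsupp.mapRange_apply, if_neg h0]
      have h2 : μ i ≤ k := by
        rw [hk]
        exact Finset.single_le_sum (f := fun a => μ a) (fun _ _ => Nat.zero_le _)
          (Finsupp.mem_support_iff.mpr h0)
      simp [Finsupp.smul_apply, h1, h2]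
  refine ⟨k, ?_⟩
  have heq : (monomial (suppInd μ) (1 : A)) ^ k =
      monomial (k • suppInd μ - μ) (1 : A) * monomial μ (1 : A) := by
    rw [monomial_pow, one_pow, monomial_mul, one_mul, tsub_add_cancel_of_le hle]
  rw [heq]
  exact Ideal.mul_mem_left _ _ hμ𝔞

end Aux

/-- implication (i) ⇒ (ii) of the unnumbered Proposition of Section 2:
if the nilradical of `A` is nilpotent, then for every monomial ideal `𝔞` of
`R = A[(X_i)_{i ∈ I}]` the torsion functors `Γ_⌊𝔞⌋` and `Γ_√𝔞` coincide. -/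
theorem torsion_floor_eq_torsion_radical_of_nilpotent_nilradical
    {A : Type u} [CommRing A] {I : Type v}
    (hnil : ∃ n : ℕ, nilradical A ^ n = 0)
    (𝔞 : Ideal (MvPolynomial I A)) (h : IsMonomialIdeal 𝔞) :
    ∀ (M : Type (max u v)) [AddCommGroup M] [Module (MvPolynomial I A) M] (x : M),
      (∃ n : ℕ, (mvFloor 𝔞) ^ n ≤ Ideal.torsionOf (MvPolynomial I A) M x) ↔
        (∃ n : ℕ, 𝔞.radical ^ n ≤ Ideal.torsionOf (MvPolynomial I A) M x) := by
  classical
  letI : LinearOrder I := linearOrderOfSTO WellOrderingRel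
  obtain ⟨c, hc⟩ := hnil
  set J : Ideal (MvPolynomial I A) := Ideal.map (C : A →+* MvPolynomial I A) (nilradical A)
    with hJ
  have hJc : J ^ c = ⊥ := by
    rw [hJ, ← Ideal.map_pow, hc, Ideal.zero_eq_bot, Ideal.map_bot]
  have h1 : 𝔞 ≤ mvFloor 𝔞 := le_mvFloor h
  have h2 : mvFloor 𝔞 ≤ 𝔞.radical := mvFloor_le_radical 𝔞
  have h4 : (mvFloor 𝔞).radical ≤ mvFloor 𝔞 ⊔ J := by
    rw [mvFloor_eq_span]
    apply radical_span_le
    rintro σ ⟨μ, _, rfl⟩ i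
    exact suppInd_sq μ i
  have h3 : 𝔞.radical ≤ mvFloor 𝔞 ⊔ J :=
    le_trans (Ideal.radical_mono h1) h4
  have key : 𝔞.radical ^ c ≤ mvFloor 𝔞 := by
    calc 𝔞.radical ^ c ≤ (mvFloor 𝔞 ⊔ J) ^ c := Ideal.pow_right_mono h3 c
    _ ≤ mvFloor 𝔞 ⊔ J ^ c := sup_pow_le _ _ c
    _ = mvFloor 𝔞 := by rw [hJc, sup_bot_eq]
  intro M _ _ x
  constructor
  · rintro ⟨n, hn⟩
    refine ⟨c * n, ?_⟩
    rw [pow_mul]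
    exact le_trans (Ideal.pow_right_mono key n) hn
  · rintro ⟨n, hn⟩
    exact ⟨n, le_trans (Ideal.pow_right_mono h2 n) hn⟩
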